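/- arXiv:2410.17203 — 2 statements merged into one kernel-verified Lean document; each statement's English description precedes it below -/
import Mathlib

section
/- Invariance of the scaled dual iterates in proximal message passing: let u, v, p, θ : ℕ → (Fin J → ℝ) be sequences satisfying the scaled price updates u^{(i+1)} = u^{(i)} + A p^{(i+1)} and v^{(i+1)} = v^{(i)} + R θ^{(i+1)} for all i. If R u^{(0)} = 0 and A v^{(0)} = 0, then R u^{(i)} = 0 and A v^{(i)} = 0 for every i ∈ ℕ. -/
open Finset

/-- The node-average operator: `(nodeAvg ν z) j` is the average of `z` over all terminals
assigned to the same node as terminal `j`. -/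
noncomputable def nodeAvg {J N : ℕ} (ν : Fin J → Fin N) (z : Fin J → ℝ) : Fin J → ℝ :=
  fun j => (∑ j' ∈ univ.filter (fun j' => ν j' = ν j), z j') /
    ((univ.filter (fun j' : Fin J => ν j' = ν j)).card : ℝ)

/-- The node-residual operator: `nodeResid ν z = z - nodeAvg ν z`. -/
noncomputable def nodeResid {J N : ℕ} (ν : Fin J → Fin N) (z : Fin J → ℝ) : Fin J → ℝ :=
  fun j => z j - nodeAvg ν z j

lemma nodeAvg_add {J N : ℕ} (ν : Fin J → Fin N) (x y : Fin J → ℝ) :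
    nodeAvg ν (x + y) = nodeAvg ν x + nodeAvg ν y := by
  funext j
  simp only [nodeAvg, Pi.add_apply, Finset.sum_add_distrib]
  ring

lemma nodeAvg_idem {J N : ℕ} (ν : Fin J → Fin N) (z : Fin J → ℝ) :
    nodeAvg ν (nodeAvg ν z) = nodeAvg ν z := by
  funext j
  have hmem : j ∈ univ.filter (fun j' : Fin J => ν j' = ν j) := by simp
  have hcard : ((univ.filter (fun j' : Fin J => ν j' = ν j)).card : ℝ) ≠ 0 := by
    have := Finset.card_pos.mpr ⟨j, hmem⟩
    exact_mod_cast this.ne'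
  have hconst : ∀ j' ∈ univ.filter (fun j' : Fin J => ν j' = ν j),
      nodeAvg ν z j' = nodeAvg ν z j := by
    intro j' hj'
    have h : ν j' = ν j := by simpa using hj'
    simp only [nodeAvg, h]
  show (∑ j' ∈ univ.filter (fun j' : Fin J => ν j' = ν j), nodeAvg ν z j') /
      ((univ.filter (fun j' : Fin J => ν j' = ν j)).card : ℝ) = nodeAvg ν z j
  rw [Finset.sum_congr rfl hconst, Finset.sum_const, nsmul_eq_mul]
  field_simp

lemma nodeResid_nodeAvg {J N : ℕ} (ν : Fin J → Fin N) (z : Fin J → ℝ) :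
    nodeResid ν (nodeAvg ν z) = 0 := by
  funext j
  simp [nodeResid, nodeAvg_idem ν z]

lemma nodeAvg_nodeResid {J N : ℕ} (ν : Fin J → Fin N) (z : Fin J → ℝ) :
    nodeAvg ν (nodeResid ν z) = 0 := by
  have hsub : nodeAvg ν (fun j => z j - nodeAvg ν z j) =
      fun j => nodeAvg ν z j - nodeAvg ν (nodeAvg ν z) j := by
    funext j
    simp only [nodeAvg, Finset.sum_sub_distrib]
    ring
  have : nodeResid ν z = fun j => z j - nodeAvg ν z j := rfl
  rw [this, hsub, nodeAvg_idem]
  funext j; simp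

/-- Invariance of the scaled dual iterates in proximal message passing: if the scaled price
updates are `u (i+1) = u i + A (p (i+1))` and `v (i+1) = v i + R (θ (i+1))`, and initially
`R (u 0) = 0` and `A (v 0) = 0`, then `R (u i) = 0` and `A (v i) = 0` for every `i`. -/
theorem dual_invariance_message_passing {J N : ℕ} (hJ : 0 < J) (hN : 0 < N)
    (ν : Fin J → Fin N) (u v p θ : ℕ → Fin J → ℝ)
    (hu : ∀ i : ℕ, u (i + 1) = u i + nodeAvg ν (p (i + 1)))
    (hv : ∀ i : ℕ, v (i + 1) = v i + nodeResid ν (θ (i + 1)))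
    (hu0 : nodeResid ν (u 0) = 0) (hv0 : nodeAvg ν (v 0) = 0) :
    ∀ i : ℕ, nodeResid ν (u i) = 0 ∧ nodeAvg ν (v i) = 0 := by
  intro i
  induction i with
  | zero => exact ⟨hu0, hv0⟩
  | succ n ih =>
    obtain ⟨ihu, ihv⟩ := ih
    constructor
    · have : nodeResid ν (u (n + 1)) =
          fun j => nodeResid ν (u n) j + nodeResid ν (nodeAvg ν (p (n + 1))) j := by
        funext j
        simp only [nodeResid, hu n, Pi.add_apply, nodeAvg_add ν (u n) (nodeAvg ν (p (n+1)))]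
        ring
      rw [this, ihu, nodeResid_nodeAvg]
      funext j; simp
    · rw [hv n, nodeAvg_add, ihv, nodeAvg_nodeResid]
      funext j; simp
end

section
/- Closed form of the AC transmission line proximal operator (single time period): let b ≠ 0, u ≥ 0, ρ_p > 0, ρ_θ > 0, and z₁, z₂, ξ₁, ξ₂ ∈ ℝ. Consider minimizing F(p₁, p₂, θ₁, θ₂) = (ρ_p/2)((p₁ − z₁)² + (p₂ − z₂)²) + (ρ_θ/2)((θ₁ − ξ₁)² + (θ₂ − ξ₂)²) over the constraint set {(p₁, p₂, θ₁, θ₂) ∈ ℝ⁴ : p₁ + p₂ = 0, p₂ = b(θ₁ − θ₂), −u ≤ p₂ ≤ u}. Then F attains a unique minimum on this set, at the point given by p₂* = min(max( (ρ_p (z₂ − z₁) + ρ_θ (ξ₁ − ξ₂)/(2b)) / (2(ρ_p + ρ_θ/(4b²))), −u), u), p₁* = −p₂*, θ₂* = (ξ₁ + ξ₂)/2 − p₂*/(2b), and θ₁* = θ₂* + p₂*/b. -/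
set_option maxHeartbeats 1000000 in
/-- Closed form of the AC transmission line proximal operator (single time period):
the quadratic objective attains a unique minimum over the DC line constraint set
`{(p₁, p₂, θ₁, θ₂) | p₁ + p₂ = 0, p₂ = b (θ₁ - θ₂), -u ≤ p₂ ≤ u}` at the stated point. -/
theorem ac_line_prox_closed_form (b u ρp ρθ : ℝ) (hb : b ≠ 0) (hu : 0 ≤ u)
    (hρp : 0 < ρp) (hρθ : 0 < ρθ) (z₁ z₂ ξ₁ ξ₂ : ℝ) :
    let F : ℝ → ℝ → ℝ → ℝ → ℝ := fun p₁ p₂ θ₁ θ₂ =>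
      ρp / 2 * ((p₁ - z₁) ^ 2 + (p₂ - z₂) ^ 2) + ρθ / 2 * ((θ₁ - ξ₁) ^ 2 + (θ₂ - ξ₂) ^ 2)
    let C : ℝ → ℝ → ℝ → ℝ → Prop := fun p₁ p₂ θ₁ θ₂ =>
      p₁ + p₂ = 0 ∧ p₂ = b * (θ₁ - θ₂) ∧ -u ≤ p₂ ∧ p₂ ≤ u
    let p₂s : ℝ := min (max ((ρp * (z₂ - z₁) + ρθ * (ξ₁ - ξ₂) / (2 * b)) /
      (2 * (ρp + ρθ / (4 * b ^ 2)))) (-u)) u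
    let p₁s : ℝ := -p₂s
    let θ₂s : ℝ := (ξ₁ + ξ₂) / 2 - p₂s / (2 * b)
    let θ₁s : ℝ := θ₂s + p₂s / b
    C p₁s p₂s θ₁s θ₂s ∧
    ∀ p₁ p₂ θ₁ θ₂ : ℝ, C p₁ p₂ θ₁ θ₂ →
      F p₁s p₂s θ₁s θ₂s ≤ F p₁ p₂ θ₁ θ₂ ∧
      (F p₁ p₂ θ₁ θ₂ = F p₁s p₂s θ₁s θ₂s → (p₁, p₂, θ₁, θ₂) = (p₁s, p₂s, θ₁s, θ₂s)) := by
  intro F C p₂s p₁s θ₂s θ₁s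
  have hb2 : (0:ℝ) < b ^ 2 := by positivity
  have hK : (0:ℝ) < ρp + ρθ / (4 * b ^ 2) := by positivity
  have hKne : ρp + ρθ / (4 * b ^ 2) ≠ 0 := ne_of_gt hK
  -- explicit unconstrained minimizer
  set m : ℝ := (ρp * (z₂ - z₁) + ρθ * (ξ₁ - ξ₂) / (2 * b)) /
      (2 * (ρp + ρθ / (4 * b ^ 2))) with hmdef
  -- the key algebraic identity (with m fully explicit)
  have key : ∀ P T : ℝ,
      F (-P) P (T + P / b) T
        = (ρp + ρθ / (4 * b ^ 2)) * (P - m) ^ 2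
          + ρθ * (T - ((ξ₁ + ξ₂) / 2 - P / (2 * b))) ^ 2
          + F (-m) m (((ξ₁ + ξ₂) / 2 - m / (2 * b)) + m / b)
              ((ξ₁ + ξ₂) / 2 - m / (2 * b)) := by
    intro P T
    simp only [F, hmdef]
    field_simp
    ring
  -- defining equations, then make everything opaque
  have hp₂s : p₂s = min (max m (-u)) u := rfl
  have hp₁s : p₁s = -p₂s := rfl
  have hθ₂s : θ₂s = (ξ₁ + ξ₂) / 2 - p₂s / (2 * b) := rfl
  have hθ₁s : θ₁s = θ₂s + p₂s / b := rfl
  clear_value θ₁s θ₂s p₁s p₂s m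
  have hp₂s_le : p₂s ≤ u := hp₂s ▸ min_le_right _ _
  have hp₂s_ge : -u ≤ p₂s := hp₂s ▸ le_min (le_max_right _ _) (by linarith)
  have hCs : C p₁s p₂s θ₁s θ₂s := by
    refine ⟨by rw [hp₁s]; ring, ?_, hp₂s_ge, hp₂s_le⟩
    show p₂s = b * (θ₁s - θ₂s)
    rw [hθ₁s]
    field_simp
    ring
  refine ⟨hCs, ?_⟩
  intro p₁ p₂ θ₁ θ₂ hC
  obtain ⟨h1, h2, h3, h4⟩ := hC
  have hp₁ : p₁ = -p₂ := by linarith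
  have hθ₁ : θ₁ = θ₂ + p₂ / b := by
    field_simp at h2 ⊢; linarith
  set K : ℝ := ρp + ρθ / (4 * b ^ 2) with hKdef
  clear_value K
  -- quadratic clamp inequality
  have hquad : K * (p₂s - m) ^ 2 ≤ K * (p₂ - m) ^ 2 ∧
      (K * (p₂ - m) ^ 2 = K * (p₂s - m) ^ 2 → p₂ = p₂s) := by
    rcases le_or_gt m (-u) with hmu | hmu
    · have he : p₂s = -u := by
        rw [hp₂s, max_eq_right hmu]
        exact min_eq_left (by linarith)
      rw [he]
      constructor
      · have h1' : (0:ℝ) ≤ p₂ + u := by linarith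
        have h2' : (0:ℝ) ≤ p₂ - u - 2 * m := by linarith
        nlinarith [mul_nonneg (mul_nonneg hK.le h1') h2']
      · intro h
        have hc := mul_left_cancel₀ hKne h
        by_contra hne
        have h1' : (0:ℝ) < p₂ + u := by
          rcases lt_or_eq_of_le h3 with h' | h'
          · linarith
          · exact absurd h'.symm hne
        have h2' : (0:ℝ) < p₂ - u - 2 * m := by linarith
        nlinarith [mul_pos h1' h2']
    · rcases le_or_gt u m with hum | hum
      · have he : p₂s = u := by
          rw [hp₂s]; exact min_eq_right (le_max_of_le_left hum)
        rw [he]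
        constructor
        · have h1' : (0:ℝ) ≤ u - p₂ := by linarith
          have h2' : (0:ℝ) ≤ 2 * m - p₂ - u := by linarith
          nlinarith [mul_nonneg (mul_nonneg hK.le h1') h2']
        · intro h
          have hc := mul_left_cancel₀ hKne h
          by_contra hne
          have h1' : (0:ℝ) < u - p₂ := lt_of_le_of_ne (by linarith) (by
            intro h'; exact hne (by linarith))
          have h2' : (0:ℝ) < 2 * m - p₂ - u := by linarith
          nlinarith [mul_pos h1' h2']
      · have he : p₂s = m := by
          rw [hp₂s, max_eq_left hmu.le, min_eq_left hum.le]
        rw [he]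
        constructor
        · nlinarith [mul_nonneg hK.le (sq_nonneg (p₂ - m))]
        · intro h
          have hc := mul_left_cancel₀ hKne h
          nlinarith [sq_nonneg (p₂ - m)]
  have hFstar : F p₁s p₂s θ₁s θ₂s
      = K * (p₂s - m) ^ 2
        + F (-m) m (((ξ₁ + ξ₂) / 2 - m / (2 * b)) + m / b)
            ((ξ₁ + ξ₂) / 2 - m / (2 * b)) := by
    have h := key p₂s θ₂s
    have hz : θ₂s - ((ξ₁ + ξ₂) / 2 - p₂s / (2 * b)) = 0 := by rw [hθ₂s]; ring
    rw [hz] at h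
    rw [hp₁s, hθ₁s, h]; ring
  have hF : F p₁ p₂ θ₁ θ₂
      = K * (p₂ - m) ^ 2 + ρθ * (θ₂ - ((ξ₁ + ξ₂) / 2 - p₂ / (2 * b))) ^ 2
        + F (-m) m (((ξ₁ + ξ₂) / 2 - m / (2 * b)) + m / b)
            ((ξ₁ + ξ₂) / 2 - m / (2 * b)) := by
    rw [hp₁, hθ₁]
    exact key p₂ θ₂
  constructor
  · rw [hFstar, hF]
    linarith [hquad.1, mul_nonneg hρθ.le (sq_nonneg (θ₂ - ((ξ₁ + ξ₂) / 2 - p₂ / (2 * b))))]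
  · intro heq
    rw [hFstar, hF] at heq
    have hθterm : 0 ≤ ρθ * (θ₂ - ((ξ₁ + ξ₂) / 2 - p₂ / (2 * b))) ^ 2 := by positivity
    have hpe : p₂ = p₂s := hquad.2 (by linarith [hquad.1, hθterm])
    have hsq : (θ₂ - ((ξ₁ + ξ₂) / 2 - p₂ / (2 * b))) ^ 2 = 0 := by
      have hz : ρθ * (θ₂ - ((ξ₁ + ξ₂) / 2 - p₂ / (2 * b))) ^ 2 = 0 := by
        linarith [hquad.1]
      exact (mul_eq_zero.mp hz).resolve_left (ne_of_gt hρθ)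
    have hθe : θ₂ = θ₂s := by
      have h0 := pow_eq_zero_iff (n := 2) (by norm_num) |>.mp hsq
      rw [hθ₂s, ← hpe]
      linarith
    have hθ1e : θ₁ = θ₁s := by rw [hθ₁, hθ₁s, hpe, hθe]
    have hp1e : p₁ = p₁s := by rw [hp₁, hp₁s, hpe]
    simp [hp1e, hpe, hθ1e, hθe]
end
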